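/- Let n ≥ 1 and let T : ℂⁿ → ℂⁿ be a linear map. The following assertions are equivalent: (a) T is recurrent; (b) T is uniformly recurrent; (c) T is IP*-recurrent; (d) T is similar to a diagonal matrix with unimodular diagonal entries, i.e. there is an invertible linear map S : ℂⁿ → ℂⁿ such that S⁻¹TS is diagonal with all diagonal entries of modulus 1. In that case, every vector in ℂⁿ is IP*-recurrent for T. -/

import Mathlib

open Filter Topology Set

noncomputable def lowerDensity (A : Set ℕ) : ℝ :=
  Filter.atTop.liminf fun N : ℕ => ((A ∩ Set.Iic N).ncard : ℝ) / (N + 1)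

noncomputable def upperDensity (A : Set ℕ) : ℝ :=
  Filter.atTop.limsup fun N : ℕ => ((A ∩ Set.Iic N).ncard : ℝ) / (N + 1)

noncomputable def upperBanachDensity (A : Set ℕ) : ℝ :=
  Filter.atTop.limsup fun N : ℕ =>
    ⨆ m : ℕ, (((A ∩ Set.Icc m (m + N)).ncard : ℝ) / (N + 1))

/-- A set of naturals is syndetic if it has bounded gaps. -/
def Syndetic (A : Set ℕ) : Prop :=
  ∃ m : ℕ, ∀ n : ℕ, ∃ k ∈ A, n ≤ k ∧ k < n + m

/-- A set of naturals is an IP-set if it contains all finite sums of distinct terms of some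
strictly increasing sequence of positive integers. -/
def IsIPSet (A : Set ℕ) : Prop :=
  ∃ k : ℕ → ℕ, StrictMono k ∧ (∀ i, 0 < k i) ∧
    ∀ s : Finset ℕ, s.Nonempty → (∑ j ∈ s, k j) ∈ A

/-- A set of naturals is an IP*-set if it meets every IP-set. -/
def IsIPStarSet (A : Set ℕ) : Prop :=
  ∀ B : Set ℕ, IsIPSet B → (A ∩ B).Nonempty

/-- The return set N(x,U) = {n : T^n x ∈ U}. -/
def returnSet {X : Type*} (T : X → X) (x : X) (U : Set X) : Set ℕ :=
  {n : ℕ | T^[n] x ∈ U}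

def IsRecurrentVec {X : Type*} [TopologicalSpace X] (T : X → X) (x : X) : Prop :=
  ∀ U ∈ nhds x, (returnSet T x U).Infinite

def IsUniformlyRecurrentVec {X : Type*} [TopologicalSpace X] (T : X → X) (x : X) : Prop :=
  ∀ U ∈ nhds x, Syndetic (returnSet T x U)

def IsFrequentlyRecurrentVec {X : Type*} [TopologicalSpace X] (T : X → X) (x : X) : Prop :=
  ∀ U ∈ nhds x, 0 < lowerDensity (returnSet T x U)

def IsUpperFrequentlyRecurrentVec {X : Type*} [TopologicalSpace X] (T : X → X) (x : X) : Prop :=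
  ∀ U ∈ nhds x, 0 < upperDensity (returnSet T x U)

def IsReiterativelyRecurrentVec {X : Type*} [TopologicalSpace X] (T : X → X) (x : X) : Prop :=
  ∀ U ∈ nhds x, 0 < upperBanachDensity (returnSet T x U)

def IsIPStarRecurrentVec {X : Type*} [TopologicalSpace X] (T : X → X) (x : X) : Prop :=
  ∀ U ∈ nhds x, IsIPStarSet (returnSet T x U)

def IsHypercyclicVec {X : Type*} [TopologicalSpace X] (T : X → X) (x : X) : Prop :=
  Dense (Set.range fun n : ℕ => T^[n] x)

def IsFrequentlyHypercyclicVec {X : Type*} [TopologicalSpace X] (T : X → X) (x : X) : Prop :=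
  ∀ U : Set X, IsOpen U → U.Nonempty → 0 < lowerDensity (returnSet T x U)

def IsUpperFrequentlyHypercyclicVec {X : Type*} [TopologicalSpace X] (T : X → X) (x : X) : Prop :=
  ∀ U : Set X, IsOpen U → U.Nonempty → 0 < upperDensity (returnSet T x U)

def IsReiterativelyHypercyclicVec {X : Type*} [TopologicalSpace X] (T : X → X) (x : X) : Prop :=
  ∀ U : Set X, IsOpen U → U.Nonempty → 0 < upperBanachDensity (returnSet T x U)

/-- Power boundedness: the iterates form an equicontinuous family (at zero). -/
def PowerBounded {X : Type*} [Zero X] [TopologicalSpace X] (T : X → X) : Prop :=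
  ∀ W₁ ∈ nhds (0 : X), ∃ W₂ ∈ nhds (0 : X), ∀ n : ℕ, ∀ x ∈ W₂, T^[n] x ∈ W₁

/-- The cut-shift-and-paste property for a family of subsets of ℕ. -/
def CuSP (F : Set ℕ → Prop) : Prop :=
  ∀ q : ℕ, 0 < q → ∀ I : Fin q → Set ℕ, (⋃ j, I j) = Set.univ →
    ∀ shift : Fin q → ℕ, ∀ A : Set ℕ, F A →
      F (⋃ j, (fun k => shift j + k) '' (A ∩ I j))

lemma aux_synd_infinite {A : Set ℕ} (h : Syndetic A) : A.Infinite := by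
  obtain ⟨m, hm⟩ := h
  apply Set.infinite_of_forall_exists_gt
  intro a
  obtain ⟨k, hk, hk1, _⟩ := hm (a + 1)
  exact ⟨k, hk, lt_of_lt_of_le (Nat.lt_succ_self a) hk1⟩

lemma aux_ipstar_syndetic {A : Set ℕ} (h : IsIPStarSet A) : Syndetic A := by
  by_contra hs
  have free : ∀ L M : ℕ, ∃ a, M ≤ a ∧ ∀ t, t ≤ L → a + t ∉ A := by
    intro L M
    rw [Syndetic] at hs
    push_neg at hs
    obtain ⟨nn, hnn⟩ := hs (L + 1 + M)
    refine ⟨nn + M, Nat.le_add_left _ _, ?_⟩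
    intro t ht hmem
    have := hnn (nn + M + t) hmem
    omega
  choose f hf1 hf2 using free
  -- partial sums
  let s : ℕ → ℕ := fun j => Nat.rec 0 (fun j sj => sj + f sj (sj + 1)) j
  let k : ℕ → ℕ := fun j => f (s j) (s j + 1)
  have hs_succ : ∀ j, s (j + 1) = s j + k j := fun j => rfl
  have hk_ge : ∀ j, s j + 1 ≤ k j := fun j => hf1 (s j) (s j + 1)
  have hk_pos : ∀ j, 0 < k j := fun j => lt_of_lt_of_le (Nat.succ_pos _) (hk_ge j)
  have hs_sum : ∀ j, s j = ∑ i ∈ Finset.range j, k i := by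
    intro j; induction j with
    | zero => rfl
    | succ j ih => rw [hs_succ, Finset.sum_range_succ, ih]
  have hk_mono : StrictMono k := by
    apply strictMono_nat_of_lt_succ
    intro j
    have h1 := hk_ge (j + 1)
    have h2 := hs_succ j
    have h3 := hk_ge j
    omega
  have hsum_notin : ∀ t : Finset ℕ, t.Nonempty → (∑ j ∈ t, k j) ∉ A := by
    intro t ht
    set j := t.max' ht with hj
    have hjt : j ∈ t := t.max'_mem ht
    have hsub : t.erase j ⊆ Finset.range j := by
      intro i hi
      rw [Finset.mem_range]
      rcases Finset.mem_erase.mp hi with ⟨hne, hit⟩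
      exact lt_of_le_of_ne (t.le_max' i hit) hne
    have hle : ∑ i ∈ t.erase j, k i ≤ s j := by
      rw [hs_sum]
      exact Finset.sum_le_sum_of_subset hsub
    have hsplit : ∑ i ∈ t, k i = k j + ∑ i ∈ t.erase j, k i := by
      rw [← Finset.add_sum_erase _ _ hjt]
    rw [hsplit]
    exact hf2 (s j) (s j + 1) _ hle
  obtain ⟨x, hxA, hxB⟩ := h {m | ∃ t : Finset ℕ, t.Nonempty ∧ (∑ j ∈ t, k j) = m}
    ⟨k, hk_mono, hk_pos, fun t ht => ⟨t, ht, rfl⟩⟩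
  obtain ⟨t, ht, hts⟩ := hxB
  exact hsum_notin t ht (hts ▸ hxA)

lemma aux_diag_ipstar {n : ℕ} (T : (Fin n → ℂ) →ₗ[ℂ] (Fin n → ℂ))
    (S : (Fin n → ℂ) ≃ₗ[ℂ] (Fin n → ℂ)) (d : Fin n → ℂ)
    (habs : ∀ i, ‖d i‖ = 1)
    (hS : ∀ x : Fin n → ℂ, S.symm (T (S x)) = fun i => d i * x i) :
    ∀ x : Fin n → ℂ, IsIPStarRecurrentVec (⇑T) x := by
  intro x U hU B hB
  obtain ⟨κ, hκmono, hκpos, hκsum⟩ := hB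
  -- iterate formula
  have hTS : ∀ y : Fin n → ℂ, T (S y) = S (fun i => d i * y i) := by
    intro y
    have := hS y
    calc T (S y) = S (S.symm (T (S y))) := (S.apply_symm_apply _).symm
      _ = S (fun i => d i * y i) := by rw [this]
  have hiter : ∀ (m : ℕ) (y : Fin n → ℂ), (⇑T)^[m] (S y) = S (fun i => d i ^ m * y i) := by
    intro m
    induction m with
    | zero => intro y; simp
    | succ m ih =>
      intro y
      rw [Function.iterate_succ_apply, hTS y, ih]
      congr 1
      funext i
      ring
  set y := S.symm x with hy
  have hSy : S y = x := S.apply_symm_apply x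
  -- neighborhood in terms of y
  have hScont : Continuous S := S.toLinearMap.continuous_of_finiteDimensional
  have hUy : S ⁻¹' U ∈ nhds y := by
    apply hScont.continuousAt.preimage_mem_nhds
    rw [hSy]; exact hU
  obtain ⟨ε, hε, hball⟩ := Metric.mem_nhds_iff.mp hUy
  set R : ℝ := ‖y‖ + 1 with hR
  have hR0 : (0 : ℝ) < R := by positivity
  set δ : ℝ := ε / R with hδ
  have hδ0 : (0 : ℝ) < δ := div_pos hε hR0
  -- pigeonhole on the torus
  set P : ℕ → ℕ := fun j => ∑ t ∈ Finset.range j, κ t with hP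
  set v : ℕ → (Fin n → ℂ) := fun j i => d i ^ P j with hv
  have hvball : ∀ j, v j ∈ Metric.closedBall (0 : Fin n → ℂ) 1 := by
    intro j
    rw [Metric.mem_closedBall, dist_zero_right]
    apply pi_norm_le_iff_of_nonneg zero_le_one |>.mpr
    intro i
    rw [norm_pow, habs, one_pow]
  obtain ⟨a, -, φ, hφmono, hφlim⟩ :=
    (isCompact_closedBall (0 : Fin n → ℂ) 1).tendsto_subseq hvball
  rw [Metric.tendsto_atTop] at hφlim
  obtain ⟨Nφ, hNφ⟩ := hφlim (δ / 2) (by positivity)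
  set j₁ := φ Nφ with hj₁
  set j₂ := φ (Nφ + 1) with hj₂
  have hj12 : j₁ < j₂ := hφmono (Nat.lt_succ_self Nφ)
  have hclose : dist (v j₂) (v j₁) < δ := by
    have h1 := hNφ Nφ le_rfl
    have h2 := hNφ (Nφ + 1) (Nat.le_succ _)
    calc dist (v j₂) (v j₁) ≤ dist (v j₂) a + dist (v j₁) a := dist_triangle_right _ _ _
      _ < δ / 2 + δ / 2 := add_lt_add h2 h1
      _ = δ := by ring
  set m : ℕ := ∑ t ∈ Finset.Ico j₁ j₂, κ t with hm
  have hmB : m ∈ B := hκsum _ (by rw [Finset.nonempty_Ico]; exact hj12)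
  have hPadd : P j₁ + m = P j₂ := by
    rw [hP, hm]
    simp only [Finset.range_eq_Ico]
    exact Finset.sum_Ico_consecutive _ (Nat.zero_le _) hj12.le
  have hdm : ∀ i, ‖d i ^ m - 1‖ < δ := by
    intro i
    have h1 : ‖d i ^ m - 1‖ = ‖d i ^ P j₂ - d i ^ P j₁‖ := by
      have : d i ^ P j₂ - d i ^ P j₁ = d i ^ P j₁ * (d i ^ m - 1) := by
        rw [mul_sub, mul_one, ← pow_add, hPadd]
      rw [this, norm_mul, norm_pow, habs, one_pow, one_mul]
    rw [h1]
    calc ‖d i ^ P j₂ - d i ^ P j₁‖ = dist (v j₂ i) (v j₁ i) := by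
          rw [Complex.dist_eq]
      _ ≤ dist (v j₂) (v j₁) := dist_le_pi_dist _ _ i
      _ < δ := hclose
  have hmem : (fun i => d i ^ m * y i) ∈ Metric.ball y ε := by
    rw [Metric.mem_ball]
    rcases Nat.eq_zero_or_pos n with hn0 | hn0
    · subst hn0
      simpa [dist_pi_def] using hε
    · rw [dist_pi_lt_iff hε]
      intro i
      have : d i ^ m * y i - y i = (d i ^ m - 1) * y i := by ring
      rw [Complex.dist_eq, this, norm_mul]
      have hyi : ‖y i‖ < R := by
        rw [hR]
        have : ‖y i‖ ≤ ‖y‖ := norm_le_pi_norm y i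
        linarith
      calc ‖d i ^ m - 1‖ * ‖y i‖ < δ * R :=
            mul_lt_mul'' (hdm i) hyi (norm_nonneg _) (norm_nonneg _)
        _ ≤ ε := by
            rw [hδ, div_mul_cancel₀ _ hR0.ne']
  refine ⟨m, ?_, hmB⟩
  show (⇑T)^[m] x ∈ U
  rw [← hSy, hiter]
  exact hball hmem

lemma aux_diag_of_vgood {n : ℕ} (T : (Fin n → ℂ) →ₗ[ℂ] (Fin n → ℂ))
    (h : (⨆ (μ : ℂ) (_ : ‖μ‖ = 1), Module.End.eigenspace T μ) = ⊤) :
    ∃ S : (Fin n → ℂ) ≃ₗ[ℂ] (Fin n → ℂ), ∃ d : Fin n → ℂ,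
      (∀ i, ‖d i‖ = 1) ∧
      ∀ x : Fin n → ℂ, S.symm (T (S x)) = fun i => d i * x i := by
  classical
  set g : ℂ → Submodule ℂ (Fin n → ℂ) :=
    fun μ => ⨆ _ : ‖μ‖ = 1, Module.End.eigenspace T μ with hg
  have hgle : ∀ μ, g μ ≤ Module.End.eigenspace T μ := fun μ => iSup_le fun _ => le_rfl
  have hind : iSupIndep g := (Module.End.eigenspaces_iSupIndep T).mono hgle
  have htop : ⨆ μ, g μ = ⊤ := h
  have hint : DirectSum.IsInternal g :=
    DirectSum.isInternal_submodule_of_iSupIndep_of_iSup_eq_top hind htop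
  let bμ : ∀ μ : ℂ, Module.Basis (Fin (Module.finrank ℂ (g μ))) ℂ (g μ) :=
    fun μ => Module.finBasis ℂ (g μ)
  let b := hint.collectedBasis bμ
  haveI : Fintype (Σ μ : ℂ, Fin (Module.finrank ℂ (g μ))) :=
    FiniteDimensional.fintypeBasisIndex b
  have hcard : Fintype.card (Σ μ : ℂ, Fin (Module.finrank ℂ (g μ))) = n := by
    rw [← Module.finrank_eq_card_basis b, Module.finrank_fin_fun]
  let eqv : (Σ μ : ℂ, Fin (Module.finrank ℂ (g μ))) ≃ Fin n := Fintype.equivFinOfCardEq hcard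
  let b' := b.reindex eqv
  let d : Fin n → ℂ := fun i => (eqv.symm i).1
  let D : (Fin n → ℂ) →ₗ[ℂ] (Fin n → ℂ) := LinearMap.pi fun i => d i • LinearMap.proj i
  have hb'mem : ∀ i, b' i ∈ g (d i) := fun i => by
    rw [Module.Basis.reindex_apply]
    exact hint.collectedBasis_mem bμ _
  have habs : ∀ i, ‖d i‖ = 1 := by
    intro i
    by_contra hne
    have hbot : g (d i) = ⊥ := iSup_neg hne
    have h2 := hb'mem i
    rw [hbot, Submodule.mem_bot] at h2
    exact b'.ne_zero i h2
  have heig : ∀ i, T (b' i) = d i • b' i := by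
    intro i
    exact Module.End.mem_eigenspace_iff.mp (hgle _ (hb'mem i))
  let S : (Fin n → ℂ) ≃ₗ[ℂ] (Fin n → ℂ) := b'.equivFun.symm
  refine ⟨S, d, habs, ?_⟩
  have hmapeq : (T ∘ₗ (S : (Fin n → ℂ) →ₗ[ℂ] (Fin n → ℂ))) =
      (S : (Fin n → ℂ) →ₗ[ℂ] (Fin n → ℂ)) ∘ₗ D := by
    apply (Pi.basisFun ℂ (Fin n)).ext
    intro j
    have hSj : S ((Pi.basisFun ℂ (Fin n)) j) = b' j := by
      show b'.equivFun.symm _ = b' j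
      rw [Module.Basis.equivFun_symm_apply]
      simp [Pi.single_apply, ite_smul]
    have hpij : D ((Pi.basisFun ℂ (Fin n)) j) =
        d j • (Pi.basisFun ℂ (Fin n)) j := by
      funext i
      simp only [D, LinearMap.pi_apply, LinearMap.smul_apply, LinearMap.proj_apply,
        Pi.basisFun_apply, Pi.smul_apply, smul_eq_mul]
      rcases eq_or_ne i j with rfl | hij
      · simp
      · simp [Pi.single_eq_of_ne hij]
    simp only [LinearMap.comp_apply, LinearEquiv.coe_coe]
    rw [hSj, heig, hpij, map_smul, hSj]
  intro x
  have := LinearMap.congr_fun hmapeq x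
  simp only [LinearMap.comp_apply, LinearEquiv.coe_coe] at this
  rw [this]
  rw [LinearEquiv.symm_apply_apply]
  funext i
  simp [D, LinearMap.pi_apply]

set_option maxHeartbeats 1000000 in
lemma aux_rec_mem {n : ℕ} (T : (Fin n → ℂ) →ₗ[ℂ] (Fin n → ℂ)) (x : Fin n → ℂ)
    (hx : IsRecurrentVec (⇑T) x) :
    x ∈ ⨆ (μ : ℂ) (_ : ‖μ‖ = 1), Module.End.eigenspace T μ := by
  classical
  have hr : ∀ ε : ℝ, 0 < ε → ∀ M : ℕ, ∃ m, M ≤ m ∧ ‖(T ^ m) x - x‖ < ε := by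
    intro ε hε M
    obtain ⟨m, hm, hMm⟩ := (hx (Metric.ball x ε) (Metric.ball_mem_nhds x hε)).exists_gt M
    refine ⟨m, hMm.le, ?_⟩
    have h2 : (⇑T)^[m] x ∈ Metric.ball x ε := hm
    rw [Metric.mem_ball, dist_eq_norm] at h2
    rw [Module.End.pow_apply]
    exact h2
  set A : ℂ → Submodule ℂ (Fin n → ℂ) := Module.End.maxGenEigenspace T with hA
  have h_top : ⨆ μ, A μ = ⊤ := Module.End.iSup_maxGenEigenspace_eq_top T
  have hint : DirectSum.IsInternal A :=
    DirectSum.isInternal_submodule_of_iSupIndep_of_iSup_eq_top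
      (Module.End.independent_maxGenEigenspace T) h_top
  set e := LinearEquiv.ofBijective (DirectSum.coeLinearMap A) hint with he
  set P : ℂ → ((Fin n → ℂ) →ₗ[ℂ] (Fin n → ℂ)) :=
    fun μ => (A μ).subtype ∘ₗ (DirectSum.component ℂ ℂ (fun μ => A μ) μ) ∘ₗ
      (e.symm : (Fin n → ℂ) →ₗ[ℂ] _) with hP
  have hPapply : ∀ μ y, P μ y = ((e.symm y) μ : Fin n → ℂ) := by
    intro μ y
    simp [hP, DirectSum.component, DFinsupp.lapply]
  have hPmem : ∀ μ y, P μ y ∈ A μ := by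
    intro μ y; rw [hPapply]; exact ((e.symm y) μ).2
  have hPsame : ∀ μ y, y ∈ A μ → P μ y = y := by
    intro μ y hy
    rw [hPapply, he, hint.ofBijective_coeLinearMap_of_mem hy]
  have hPne : ∀ μ ν y, ν ≠ μ → y ∈ A ν → P μ y = 0 := by
    intro μ ν y hne hy
    rw [hPapply, he, hint.ofBijective_coeLinearMap_of_mem_ne hne hy]
    rfl
  have hTmaps : ∀ ν y, y ∈ A ν → T y ∈ A ν := fun ν y hy =>
    Module.End.mapsTo_maxGenEigenspace_of_comm (Commute.refl T) ν hy
  have hPcomm : ∀ μ y, P μ (T y) = T (P μ y) := by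
    intro μ
    have hker : ⨆ ν, A ν ≤ LinearMap.ker (P μ ∘ₗ T - T ∘ₗ P μ) := by
      refine iSup_le fun ν y hy => ?_
      have hrfl : (P μ ∘ₗ T - T ∘ₗ P μ) y = P μ (T y) - T (P μ y) := rfl
      rw [LinearMap.mem_ker, hrfl]
      by_cases hνμ : ν = μ
      · subst hνμ
        rw [hPsame _ _ (hTmaps ν _ hy), hPsame _ _ hy, sub_self]
      · rw [hPne μ ν _ hνμ (hTmaps ν _ hy), hPne μ ν _ hνμ hy, map_zero, sub_self]
    rw [h_top] at hker
    intro y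
    have h3 := hker (Submodule.mem_top : y ∈ ⊤)
    simp only [LinearMap.mem_ker, LinearMap.sub_apply, LinearMap.comp_apply,
      sub_eq_zero] at h3
    exact h3
  have hPpow : ∀ μ (m : ℕ) (y), P μ ((T ^ m) y) = (T ^ m) (P μ y) := by
    intro μ m
    induction m with
    | zero => intro y; simp
    | succ m ih =>
      intro y
      have h1 : (T ^ (m + 1)) y = (T ^ m) (T y) := by rw [pow_succ, Module.End.mul_apply]
      have h2 : (T ^ (m + 1)) (P μ y) = (T ^ m) (T (P μ y)) := by
        rw [pow_succ, Module.End.mul_apply]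
      rw [h1, h2, ih (T y), hPcomm]
  obtain ⟨s, hxs⟩ : ∃ s : Finset ℂ, x = ∑ μ ∈ s, P μ x := by
    refine ⟨(e.symm x).support, ?_⟩
    calc x = DirectSum.coeLinearMap A (e.symm x) := (e.apply_symm_apply x).symm
      _ = ∑ μ ∈ (e.symm x).support, ((e.symm x) μ : Fin n → ℂ) := by
          rw [DirectSum.coeLinearMap_eq_dfinsuppSum]; rfl
      _ = ∑ μ ∈ (e.symm x).support, P μ x :=
          Finset.sum_congr rfl fun μ _ => (hPapply μ x).symm
  have hcomp : ∀ μ : ℂ,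
      P μ x ∈ ⨆ (μ : ℂ) (_ : ‖μ‖ = 1), Module.End.eigenspace T μ := by
    intro μ
    by_cases hy0 : P μ x = 0
    · rw [hy0]; exact Submodule.zero_mem _
    set y := P μ x with hy
    obtain ⟨k, hk⟩ := (Module.End.mem_maxGenEigenspace T μ y).mp (hPmem μ x)
    set N : Module.End ℂ (Fin n → ℂ) := T - μ • 1 with hN
    have hTN : (T : Module.End ℂ (Fin n → ℂ)) = N + μ • 1 := by rw [hN]; abel
    have hNT : Commute N T := by
      rw [hN]
      exact (Commute.refl T).sub_left ((Commute.one_left T).smul_left μ)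
    have opb : ∀ L : Module.End ℂ (Fin n → ℂ), ∃ C : ℝ, 0 < C ∧ ∀ w, ‖L w‖ ≤ C * ‖w‖ := by
      intro L
      refine ⟨‖LinearMap.toContinuousLinearMap L‖ + 1, by positivity, fun w => ?_⟩
      calc ‖L w‖ = ‖LinearMap.toContinuousLinearMap L w‖ := rfl
        _ ≤ ‖LinearMap.toContinuousLinearMap L‖ * ‖w‖ := ContinuousLinearMap.le_opNorm _ _
        _ ≤ (‖LinearMap.toContinuousLinearMap L‖ + 1) * ‖w‖ := by
            apply mul_le_mul_of_nonneg_right _ (norm_nonneg w)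
            linarith
    obtain ⟨C, hC0, hCb⟩ := opb (P μ)
    have hrc : ∀ ε : ℝ, 0 < ε → ∀ M : ℕ, ∃ m, M ≤ m ∧ ‖(T ^ m) y - y‖ < ε := by
      intro ε hε M
      obtain ⟨m, hMm, hm⟩ := hr (ε / C) (div_pos hε hC0) M
      refine ⟨m, hMm, ?_⟩
      have h4 : (T ^ m) y - y = P μ ((T ^ m) x - x) := by
        rw [map_sub, hPpow]
      rw [h4]
      calc ‖P μ ((T ^ m) x - x)‖ ≤ C * ‖(T ^ m) x - x‖ := hCb _
        _ < C * (ε / C) := by exact mul_lt_mul_of_pos_left hm hC0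
        _ = ε := by field_simp
    have hik : ∀ i, k ≤ i → (N ^ i) y = 0 := by
      intro i hi
      have h5 : N ^ i = N ^ (i - k) * N ^ k := by rw [← pow_add, Nat.sub_add_cancel hi]
      rw [h5, Module.End.mul_apply, hk, map_zero]
    set a : ℝ := ‖μ‖ with ha
    have ha0 : 0 ≤ a := by rw [ha]; exact norm_nonneg _
    rcases lt_trichotomy a 1 with hlt | heq | hgt
    · -- |μ| < 1 : y = 0, contradiction
      exfalso
      have hterm : ∀ m i : ℕ,
          (N ^ i * (μ • (1 : Module.End ℂ (Fin n → ℂ))) ^ (m - i) *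
            (m.choose i : Module.End ℂ (Fin n → ℂ))) y
          = ((m.choose i : ℂ) * μ ^ (m - i)) • ((N ^ i) y) := by
        intro m i
        rw [Module.End.mul_apply, Module.End.mul_apply]
        have h5 : ((m.choose i : Module.End ℂ (Fin n → ℂ))) y = (m.choose i : ℂ) • y := by
          simp [Module.End.natCast_apply, Nat.cast_smul_eq_nsmul]
        rw [h5, smul_pow, one_pow, LinearMap.smul_apply, Module.End.one_apply,
          map_smul, map_smul, smul_smul, mul_comm]
      have hformula : ∀ m, k ≤ m →
          (T ^ m) y = ∑ i ∈ Finset.range k, ((m.choose i : ℂ) * μ ^ (m - i)) • ((N ^ i) y) := by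
        intro m hm
        have hcm : Commute N (μ • (1 : Module.End ℂ (Fin n → ℂ))) :=
          (Commute.one_right N).smul_right μ
        have h6 : (T ^ m) y = ∑ i ∈ Finset.range (m + 1),
            ((m.choose i : ℂ) * μ ^ (m - i)) • ((N ^ i) y) := by
          conv_lhs => rw [hTN]
          rw [hcm.add_pow, LinearMap.sum_apply]
          exact Finset.sum_congr rfl fun i _ => hterm m i
        rw [h6]
        symm
        apply Finset.sum_subset
        · exact Finset.range_subset_range.mpr (by omega)
        · intro i hi hni
          simp only [Finset.mem_range] at hi hni
          rw [hik i (by omega), smul_zero]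
      obtain ⟨a', ha'a, ha'1, ha'h⟩ : ∃ a' : ℝ, a ≤ a' ∧ a' < 1 ∧ (1/2 : ℝ) ≤ a' :=
        ⟨max a (1/2), le_max_left _ _, max_lt hlt (by norm_num), le_max_right _ _⟩
      have ha'0 : (0:ℝ) < a' := lt_of_lt_of_le (by norm_num) ha'h
      have hsummand : ∀ i : ℕ, Tendsto
          (fun m : ℕ => (m.choose i : ℝ) * a ^ (m - i) * ‖(N ^ i) y‖) atTop (nhds 0) := by
        intro i
        have h1 : Tendsto (fun m : ℕ => ((m : ℝ) ^ i * a' ^ m) * ((2 : ℝ) ^ i * ‖(N ^ i) y‖))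
            atTop (nhds 0) := by
          have h2 := (tendsto_pow_const_mul_const_pow_of_lt_one i ha'0.le ha'1).mul_const
            ((2 : ℝ) ^ i * ‖(N ^ i) y‖)
          simpa using h2
        apply squeeze_zero' ?_ ?_ h1
        · filter_upwards with m; positivity
        · filter_upwards [eventually_ge_atTop i] with m hmi
          have h2 : (m.choose i : ℝ) ≤ (m : ℝ) ^ i := by
            exact_mod_cast Nat.choose_le_pow m i
          have h3 : a ^ (m - i) ≤ (2 : ℝ) ^ i * a' ^ m := by
            have e1 : a ^ (m - i) ≤ a' ^ (m - i) := pow_le_pow_left₀ ha0 ha'a _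
            have e2 : a' ^ m = a' ^ (m - i) * a' ^ i := by
              rw [← pow_add, Nat.sub_add_cancel hmi]
            have e3 : ((1:ℝ)/2) ^ i ≤ a' ^ i := pow_le_pow_left₀ (by norm_num) ha'h i
            have e5 : a' ^ (m - i) * ((1:ℝ)/2) ^ i ≤ a' ^ m := by
              rw [e2]
              exact mul_le_mul_of_nonneg_left e3 (pow_nonneg ha'0.le _)
            have e6 : ((1:ℝ)/2) ^ i * (2:ℝ) ^ i = 1 := by
              rw [← mul_pow]; norm_num
            calc a ^ (m - i) ≤ a' ^ (m - i) := e1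
              _ = a' ^ (m - i) * (((1:ℝ)/2) ^ i * (2:ℝ) ^ i) := by rw [e6, mul_one]
              _ = (a' ^ (m - i) * ((1:ℝ)/2) ^ i) * (2:ℝ) ^ i := by ring
              _ ≤ a' ^ m * (2:ℝ) ^ i := mul_le_mul_of_nonneg_right e5 (by positivity)
              _ = (2:ℝ) ^ i * a' ^ m := mul_comm _ _
          calc (m.choose i : ℝ) * a ^ (m - i) * ‖(N ^ i) y‖
              ≤ ((m:ℝ) ^ i) * ((2:ℝ) ^ i * a' ^ m) * ‖(N ^ i) y‖ := by
                apply mul_le_mul_of_nonneg_right _ (norm_nonneg _)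
                exact mul_le_mul h2 h3 (by positivity) (by positivity)
            _ = (m:ℝ) ^ i * a' ^ m * ((2:ℝ) ^ i * ‖(N ^ i) y‖) := by ring
      have hbound : ∀ m, k ≤ m → ‖(T ^ m) y‖ ≤
          ∑ i ∈ Finset.range k, (m.choose i : ℝ) * a ^ (m - i) * ‖(N ^ i) y‖ := by
        intro m hm
        rw [hformula m hm]
        refine (norm_sum_le _ _).trans ?_
        refine Finset.sum_le_sum fun i _ => ?_
        refine le_of_eq ?_
        rw [norm_smul, norm_mul, norm_pow, Complex.norm_natCast, ← ha]
      have hten : Tendsto (fun m : ℕ => ‖(T ^ m) y‖) atTop (nhds 0) := by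
        have hsum : Tendsto (fun m : ℕ => ∑ i ∈ Finset.range k,
            (m.choose i : ℝ) * a ^ (m - i) * ‖(N ^ i) y‖) atTop (nhds 0) := by
          have h7 := tendsto_finset_sum (Finset.range k) (fun i (_ : i ∈ Finset.range k) => hsummand i)
          simpa using h7
        apply squeeze_zero' ?_ ?_ hsum
        · filter_upwards with m; exact norm_nonneg _
        · filter_upwards [eventually_ge_atTop k] with m hm
          exact hbound m hm
      have hy0' : (0:ℝ) < ‖y‖ := norm_pos_iff.mpr hy0
      have hev : ∀ᶠ m in atTop, ‖(T ^ m) y‖ < ‖y‖ / 2 :=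
        hten.eventually (gt_mem_nhds (by linarith))
      rw [eventually_atTop] at hev
      obtain ⟨M, hM⟩ := hev
      obtain ⟨m, hMm, hm⟩ := hrc (‖y‖ / 2) (by linarith) M
      have h8 := hM m hMm
      have h9 : ‖y‖ ≤ ‖(T ^ m) y - y‖ + ‖(T ^ m) y‖ := by
        calc ‖y‖ = ‖((T ^ m) y - ((T ^ m) y - y))‖ := by congr 1; abel
          _ ≤ ‖(T ^ m) y‖ + ‖(T ^ m) y - y‖ := norm_sub_le _ _
          _ = ‖(T ^ m) y - y‖ + ‖(T ^ m) y‖ := by ring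
      linarith
    · -- |μ| = 1
      have habs1 : ‖μ‖ = 1 := ha ▸ heq
      have hμ0 : μ ≠ 0 := by
        intro h0
        rw [h0] at habs1
        simp at habs1
      have hNy : N y = 0 := by
        by_contra hNy
        have hk1 : 1 ≤ k := by
          by_contra hk0
          push_neg at hk0
          have hk00 : k = 0 := by omega
          rw [hk00, pow_zero, Module.End.one_apply] at hk
          exact hy0 hk
        set r := Nat.findGreatest (fun i => (N ^ i) y ≠ 0) k with hrdef
        have hr1 : 1 ≤ r := Nat.le_findGreatest (P := fun i => (N ^ i) y ≠ 0) hk1 (by simpa using hNy)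
        have hrspec : (N ^ r) y ≠ 0 :=
          Nat.findGreatest_spec (P := fun i => (N ^ i) y ≠ 0) (m := 1) hk1 (by simpa using hNy)
        have hrsucc : (N ^ (r + 1)) y = 0 := by
          rcases le_or_gt (r + 1) k with hh | hh
          · by_contra hne
            exact Nat.findGreatest_is_greatest (Nat.lt_succ_self r) hh hne
          · exact hik _ (by omega)
        set z := (N ^ r) y with hzdef
        set w := (N ^ (r - 1)) y with hwdef
        have hNw : N w = z := by
          rw [hwdef, hzdef, ← Module.End.mul_apply, ← pow_succ']
          congr 2
          omega
        have hNz : N z = 0 := by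
          rw [hzdef, ← Module.End.mul_apply, ← pow_succ', hrsucc]
        have hTz : T z = μ • z := by
          conv_lhs => rw [hTN]
          rw [LinearMap.add_apply, hNz, LinearMap.smul_apply, Module.End.one_apply, zero_add]
        have hTw : T w = μ • w + z := by
          conv_lhs => rw [hTN]
          rw [LinearMap.add_apply, hNw, LinearMap.smul_apply, Module.End.one_apply, add_comm]
        have hTmz : ∀ m : ℕ, (T ^ m) z = μ ^ m • z := by
          intro m
          induction m with
          | zero => simp
          | succ m ih =>
            have h1 : (T ^ (m+1)) z = T ((T ^ m) z) := by rw [pow_succ', Module.End.mul_apply]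
            rw [h1, ih, map_smul, hTz, smul_smul, ← pow_succ]
        have hTmw : ∀ m : ℕ, (T ^ m) w = μ ^ m • w + ((m : ℂ) * μ ^ m * μ⁻¹) • z := by
          intro m
          induction m with
          | zero => simp
          | succ m ih =>
            have h1 : (T ^ (m+1)) w = T ((T ^ m) w) := by rw [pow_succ', Module.End.mul_apply]
            rw [h1, ih, map_add, map_smul, map_smul, hTw, hTz]
            match_scalars
            · ring
            · field_simp
              ring
        obtain ⟨Cr, hCr0, hCrb⟩ := opb (N ^ (r - 1))
        have hmain : ∀ m : ℕ, ‖(T ^ m) y - y‖ < 1 →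
            (m : ℝ) * ‖z‖ ≤ ‖w‖ + Cr * (‖y‖ + 1) := by
          intro m hm
          have h1 : (N ^ (r - 1)) ((T ^ m) y) = (T ^ m) w := by
            calc (N ^ (r - 1)) ((T ^ m) y) = ((N ^ (r - 1)) * (T ^ m)) y := rfl
              _ = ((T ^ m) * (N ^ (r - 1))) y := by rw [(hNT.pow_pow (r - 1) m).eq]
              _ = (T ^ m) w := rfl
          have h2 : ‖(T ^ m) w‖ ≤ Cr * (‖y‖ + 1) := by
            rw [← h1]
            calc ‖(N ^ (r - 1)) ((T ^ m) y)‖ ≤ Cr * ‖(T ^ m) y‖ := hCrb _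
              _ ≤ Cr * (‖y‖ + 1) := by
                  apply mul_le_mul_of_nonneg_left _ hCr0.le
                  have h3 := norm_sub_norm_le ((T ^ m) y) y
                  linarith
          have h5 : ((m : ℂ) * μ ^ m * μ⁻¹) • z = (T ^ m) w - μ ^ m • w := by
            rw [hTmw m]; abel
          have h6 : ‖((m : ℂ) * μ ^ m * μ⁻¹) • z‖ = (m : ℝ) * ‖z‖ := by
            rw [norm_smul]
            have h6' : ‖(m : ℂ) * μ ^ m * μ⁻¹‖ = (m : ℝ) := by
              simp [norm_mul, norm_inv, norm_pow, habs1]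
            rw [h6']
          calc (m : ℝ) * ‖z‖ = ‖(T ^ m) w - μ ^ m • w‖ := by rw [← h6, h5]
            _ ≤ ‖(T ^ m) w‖ + ‖μ ^ m • w‖ := norm_sub_le _ _
            _ = ‖(T ^ m) w‖ + ‖w‖ := by
                rw [norm_smul, norm_pow, habs1, one_pow, one_mul]
            _ ≤ ‖w‖ + Cr * (‖y‖ + 1) + 0 := by linarith
            _ = ‖w‖ + Cr * (‖y‖ + 1) := by ring
        have hz0 : (0:ℝ) < ‖z‖ := norm_pos_iff.mpr hrspec
        obtain ⟨M, hM⟩ := exists_nat_gt ((‖w‖ + Cr * (‖y‖ + 1)) / ‖z‖)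
        obtain ⟨m, hMm, hm⟩ := hrc 1 one_pos M
        have h7 := hmain m hm
        have h8 : (‖w‖ + Cr * (‖y‖ + 1)) / ‖z‖ < (m : ℝ) :=
          lt_of_lt_of_le hM (by exact_mod_cast hMm)
        rw [div_lt_iff₀ hz0] at h8
        linarith
      have hTy : T y = μ • y := by
        conv_lhs => rw [hTN]
        rw [LinearMap.add_apply, hNy, LinearMap.smul_apply, Module.End.one_apply, zero_add]
      have hmem : y ∈ Module.End.eigenspace T μ := Module.End.mem_eigenspace_iff.mpr hTy
      exact Submodule.mem_iSup_of_mem μ (Submodule.mem_iSup_of_mem habs1 hmem)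
    · -- |μ| > 1 : contradiction
      exfalso
      set r := Nat.findGreatest (fun i => (N ^ i) y ≠ 0) k with hrdef
      have hrspec : (N ^ r) y ≠ 0 :=
        Nat.findGreatest_spec (P := fun i => (N ^ i) y ≠ 0) (m := 0) (Nat.zero_le k) (by simpa using hy0)
      have hrsucc : (N ^ (r + 1)) y = 0 := by
        rcases le_or_gt (r + 1) k with hh | hh
        · by_contra hne
          exact Nat.findGreatest_is_greatest (Nat.lt_succ_self r) hh hne
        · exact hik _ (by omega)
      set z := (N ^ r) y with hzdef
      have hNz : N z = 0 := by
        rw [hzdef, ← Module.End.mul_apply, ← pow_succ', hrsucc]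
      have hTz : T z = μ • z := by
        conv_lhs => rw [hTN]
        rw [LinearMap.add_apply, hNz, LinearMap.smul_apply, Module.End.one_apply, zero_add]
      have hTmz : ∀ m : ℕ, (T ^ m) z = μ ^ m • z := by
        intro m
        induction m with
        | zero => simp
        | succ m ih =>
          have h1 : (T ^ (m+1)) z = T ((T ^ m) z) := by rw [pow_succ', Module.End.mul_apply]
          rw [h1, ih, map_smul, hTz, smul_smul, ← pow_succ]
      obtain ⟨Cr, hCr0, hCrb⟩ := opb (N ^ r)
      have hmain : ∀ m : ℕ, ‖(T ^ m) y - y‖ < 1 → a ^ m * ‖z‖ ≤ Cr * (‖y‖ + 1) := by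
        intro m hm
        have h1 : (N ^ r) ((T ^ m) y) = (T ^ m) z := by
          calc (N ^ r) ((T ^ m) y) = ((N ^ r) * (T ^ m)) y := rfl
            _ = ((T ^ m) * (N ^ r)) y := by rw [(hNT.pow_pow r m).eq]
            _ = (T ^ m) z := rfl
        have h2 : a ^ m * ‖z‖ = ‖(T ^ m) z‖ := by
          rw [hTmz, norm_smul, norm_pow, ← ha]
        rw [h2, ← h1]
        calc ‖(N ^ r) ((T ^ m) y)‖ ≤ Cr * ‖(T ^ m) y‖ := hCrb _
          _ ≤ Cr * (‖y‖ + 1) := by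
              apply mul_le_mul_of_nonneg_left _ hCr0.le
              have h3 := norm_sub_norm_le ((T ^ m) y) y
              linarith
      have hz0 : (0:ℝ) < ‖z‖ := norm_pos_iff.mpr hrspec
      have hpt : Tendsto (fun m : ℕ => a ^ m) atTop atTop :=
        tendsto_pow_atTop_atTop_of_one_lt hgt
      have hev : ∀ᶠ m in atTop, Cr * (‖y‖ + 1) / ‖z‖ < a ^ m :=
        hpt.eventually_gt_atTop _
      rw [eventually_atTop] at hev
      obtain ⟨M, hM⟩ := hev
      obtain ⟨m, hMm, hm⟩ := hrc 1 one_pos M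
      have h7 := hmain m hm
      have h8 := hM m hMm
      rw [div_lt_iff₀ hz0] at h8
      linarith
  rw [hxs]
  exact Submodule.sum_mem _ fun μ _ => hcomp μ

theorem stmt19 (n : ℕ) (hn : 1 ≤ n) (T : (Fin n → ℂ) →ₗ[ℂ] (Fin n → ℂ)) :
    [Dense {x : Fin n → ℂ | IsRecurrentVec (⇑T) x},
     Dense {x : Fin n → ℂ | IsUniformlyRecurrentVec (⇑T) x},
     Dense {x : Fin n → ℂ | IsIPStarRecurrentVec (⇑T) x},
     ∃ S : (Fin n → ℂ) ≃ₗ[ℂ] (Fin n → ℂ), ∃ d : Fin n → ℂ,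
       (∀ i, ‖d i‖ = 1) ∧
       ∀ x : Fin n → ℂ, S.symm (T (S x)) = fun i => d i * x i].TFAE ∧
    (Dense {x : Fin n → ℂ | IsRecurrentVec (⇑T) x} →
      ∀ x : Fin n → ℂ, IsIPStarRecurrentVec (⇑T) x) := by
  have hkey : Dense {x : Fin n → ℂ | IsRecurrentVec (⇑T) x} →
      ∃ S : (Fin n → ℂ) ≃ₗ[ℂ] (Fin n → ℂ), ∃ d : Fin n → ℂ,
        (∀ i, ‖d i‖ = 1) ∧
        ∀ x : Fin n → ℂ, S.symm (T (S x)) = fun i => d i * x i := by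
    intro hd
    apply aux_diag_of_vgood T
    rw [eq_top_iff]
    intro x _
    have h1 : x ∈ closure {x : Fin n → ℂ | IsRecurrentVec (⇑T) x} := hd x
    have h2 : closure {x : Fin n → ℂ | IsRecurrentVec (⇑T) x} ⊆
        ((⨆ (μ : ℂ) (_ : ‖μ‖ = 1), Module.End.eigenspace T μ :
          Submodule ℂ (Fin n → ℂ)) : Set (Fin n → ℂ)) := by
      apply closure_minimal
      · intro z hz
        exact aux_rec_mem T z hz
      · exact Submodule.closed_of_finiteDimensional _
    exact h2 h1
  have hdiag : (∃ S : (Fin n → ℂ) ≃ₗ[ℂ] (Fin n → ℂ), ∃ d : Fin n → ℂ,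
        (∀ i, ‖d i‖ = 1) ∧
        ∀ x : Fin n → ℂ, S.symm (T (S x)) = fun i => d i * x i) →
      ∀ x : Fin n → ℂ, IsIPStarRecurrentVec (⇑T) x := by
    rintro ⟨S, d, h1, h2⟩ x
    exact aux_diag_ipstar T S d h1 h2 x
  constructor
  · tfae_have 1 → 4 := hkey
    tfae_have 4 → 3 := by
      intro h
      have h2 := hdiag h
      have h3 : {x : Fin n → ℂ | IsIPStarRecurrentVec (⇑T) x} = Set.univ :=
        Set.eq_univ_of_forall h2
      rw [h3]
      exact dense_univ
    tfae_have 3 → 2 := fun h =>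
      h.mono fun x (hx : IsIPStarRecurrentVec (⇑T) x) U hU =>
        aux_ipstar_syndetic (hx U hU)
    tfae_have 2 → 1 := fun h =>
      h.mono fun x (hx : IsUniformlyRecurrentVec (⇑T) x) U hU =>
        aux_synd_infinite (hx U hU)
    tfae_finish
  · intro hd x
    exact hdiag (hkey hd) x
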